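/- arXiv:0912.2789 — 2 statements merged into one kernel-verified Lean document; each statement's English description precedes it below -/
import Mathlib

section
/- The Clebsch–Gordan pairing ⟨u,v⟩_p, viewed as a bilinear map V_m × V_n → V_{m+n-2p}, is equivariant for the derivation action of sl(2): for any α in the Lie algebra generated by X = y∂/∂x, Y = -x∂/∂y, H = x∂/∂x - y∂/∂y, we have α(⟨u,v⟩_p) = ⟨α(u), v⟩_p + ⟨u, α(v)⟩_p. -/
open MvPolynomial

noncomputable section

abbrev P := MvPolynomial (Fin 2) ℝ

/-- partial derivative, as a plain function -/
def pd (i : Fin 2) (u : P) : P := MvPolynomial.pderiv i u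

/-- The Clebsch-Gordan pairing of binary forms. -/
def CG (p : ℕ) (u v : P) : P :=
  ((p.factorial : ℝ)⁻¹) •
    ∑ k ∈ Finset.range (p + 1),
      (((-1 : ℝ) ^ k * (p.choose k : ℝ)) •
        ((pd 0)^[p - k] ((pd 1)^[k] u) * (pd 0)^[k] ((pd 1)^[p - k] v)))

/-- X = y ∂/∂x as a linear endomorphism of polynomials. -/
def Xe : Module.End ℝ P :=
  (LinearMap.mulLeft ℝ (X 1 : P)).comp (MvPolynomial.pderiv (0 : Fin 2)).toLinearMap

/-- Y = -x ∂/∂y. -/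
def Ye : Module.End ℝ P :=
  - (LinearMap.mulLeft ℝ (X 0 : P)).comp (MvPolynomial.pderiv (1 : Fin 2)).toLinearMap

/-- H = x ∂/∂x - y ∂/∂y. -/
def He : Module.End ℝ P :=
  (LinearMap.mulLeft ℝ (X 0 : P)).comp (MvPolynomial.pderiv (0 : Fin 2)).toLinearMap
    - (LinearMap.mulLeft ℝ (X 1 : P)).comp (MvPolynomial.pderiv (1 : Fin 2)).toLinearMap

lemma pd_add (i : Fin 2) (a b : P) : pd i (a + b) = pd i a + pd i b := map_add _ _ _
lemma pd_smul (i : Fin 2) (c : ℝ) (a : P) : pd i (c • a) = c • pd i a := by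
  simp [pd]
lemma pd_mul (i : Fin 2) (a b : P) : pd i (a * b) = pd i a * b + a * pd i b := by
  simp [pd, pderiv_mul]; ring

lemma iter_pd_add (i : Fin 2) (k : ℕ) (a b : P) :
    (pd i)^[k] (a + b) = (pd i)^[k] a + (pd i)^[k] b := by
  induction k generalizing a b with
  | zero => simp
  | succ k ih => simp [Function.iterate_succ_apply, pd_add, ih]

lemma iter_pd_smul (i : Fin 2) (k : ℕ) (c : ℝ) (a : P) :
    (pd i)^[k] (c • a) = c • (pd i)^[k] a := by
  induction k generalizing a with
  | zero => simp
  | succ k ih => simp [Function.iterate_succ_apply, pd_smul, ih]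

lemma pd_comm (a : P) : pd 0 (pd 1 a) = pd 1 (pd 0 a) := by
  induction a using MvPolynomial.induction_on' with
  | monomial s c =>
    simp only [pd, pderiv_monomial]
    rw [show ((s - fun₀ | (1:Fin 2) => 1) 0) = s 0 by simp [Finsupp.sub_apply],
      show ((s - fun₀ | (0:Fin 2) => 1) 1) = s 1 by simp [Finsupp.sub_apply],
      tsub_tsub, tsub_tsub, add_comm ((fun₀ | (1:Fin 2) => 1) : Fin 2 →₀ ℕ)]
    ring_nf
  | add p q hp hq => simp [pd_add, hp, hq]

lemma pd_commute : Function.Commute (pd 0) (pd 1) := fun a => pd_comm a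

lemma iter_comm (a b : ℕ) (u : P) :
    (pd 0)^[a] ((pd 1)^[b] u) = (pd 1)^[b] ((pd 0)^[a] u) :=
  ((pd_commute.iterate_left a).iterate_right b) u

lemma pd0_y (u : P) : pd 0 (X 1 * u) = X 1 * pd 0 u := by
  rw [pd_mul]; simp [pd, pderiv_X_of_ne (by decide : (1:Fin 2) ≠ 0)]

lemma pd1_x (u : P) : pd 1 (X 0 * u) = X 0 * pd 1 u := by
  rw [pd_mul]; simp [pd, pderiv_X_of_ne (by decide : (0:Fin 2) ≠ 1)]

lemma pd1_y (u : P) : pd 1 (X 1 * u) = u + X 1 * pd 1 u := by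
  rw [pd_mul]; simp [pd]

lemma pd0_x (u : P) : pd 0 (X 0 * u) = u + X 0 * pd 0 u := by
  rw [pd_mul]; simp [pd]

lemma iterf_y (k : ℕ) (u : P) : (pd 0)^[k] (X 1 * u) = X 1 * (pd 0)^[k] u := by
  induction k generalizing u with
  | zero => simp
  | succ k ih =>
    rw [Function.iterate_succ_apply, pd0_y, ih, ← Function.iterate_succ_apply]

lemma iterg_x (k : ℕ) (u : P) : (pd 1)^[k] (X 0 * u) = X 0 * (pd 1)^[k] u := by
  induction k generalizing u with
  | zero => simp
  | succ k ih =>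
    rw [Function.iterate_succ_apply, pd1_x, ih, ← Function.iterate_succ_apply]

lemma iterg_y (k : ℕ) (u : P) :
    (pd 1)^[k] (X 1 * u) = X 1 * (pd 1)^[k] u + (k : ℝ) • (pd 1)^[k - 1] u := by
  induction k generalizing u with
  | zero => simp
  | succ k ih =>
    rw [Function.iterate_succ_apply, pd1_y, iter_pd_add, ih]
    cases k with
    | zero => simp [add_comm]
    | succ j =>
      simp only [show (j + 1 + 1 - 1) = j + 1 from rfl, show (j + 1 - 1) = j from rfl,
        ← Function.iterate_succ_apply]
      push_cast
      module

lemma iterf_x (k : ℕ) (u : P) :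
    (pd 0)^[k] (X 0 * u) = X 0 * (pd 0)^[k] u + (k : ℝ) • (pd 0)^[k - 1] u := by
  induction k generalizing u with
  | zero => simp
  | succ k ih =>
    rw [Function.iterate_succ_apply, pd0_x, iter_pd_add, ih]
    cases k with
    | zero => simp [add_comm]
    | succ j =>
      simp only [show (j + 1 + 1 - 1) = j + 1 from rfl, show (j + 1 - 1) = j from rfl,
        ← Function.iterate_succ_apply]
      push_cast
      module

lemma pd_sub (i : Fin 2) (a b : P) : pd i (a - b) = pd i a - pd i b := map_sub _ _ _

lemma iter_pd_sub (i : Fin 2) (k : ℕ) (a b : P) :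
    (pd i)^[k] (a - b) = (pd i)^[k] a - (pd i)^[k] b := by
  induction k generalizing a b with
  | zero => simp
  | succ k ih => simp [Function.iterate_succ_apply, pd_sub, ih]

def Dab (a b : ℕ) (u : P) : P := (pd 0)^[a] ((pd 1)^[b] u)

lemma CG_def (p : ℕ) (u v : P) : CG p u v =
    ((p.factorial : ℝ)⁻¹) • ∑ k ∈ Finset.range (p + 1),
      (((-1 : ℝ) ^ k * (p.choose k : ℝ)) • (Dab (p - k) k u * Dab k (p - k) v)) := rfl

lemma iterg_pd0 (b : ℕ) (u : P) : (pd 1)^[b] (pd 0 u) = pd 0 ((pd 1)^[b] u) :=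
  ((pd_commute.iterate_right b) u).symm

lemma pd0_Dab (a b : ℕ) (u : P) : pd 0 (Dab a b u) = Dab (a + 1) b u := by
  rw [Dab, Dab, ← Function.iterate_succ_apply' (pd 0)]

lemma pd1_Dab (a b : ℕ) (u : P) : pd 1 (Dab a b u) = Dab a (b + 1) u := by
  rw [Dab, Dab, ← (pd_commute.iterate_left a) ((pd 1)^[b] u),
    ← Function.iterate_succ_apply' (pd 1)]

lemma Dab_add (a b : ℕ) (s t : P) : Dab a b (s + t) = Dab a b s + Dab a b t := by
  simp [Dab, iter_pd_add]

lemma Dab_sub (a b : ℕ) (s t : P) : Dab a b (s - t) = Dab a b s - Dab a b t := by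
  simp [Dab, iter_pd_sub]

lemma Dab_smul (a b : ℕ) (c : ℝ) (s : P) : Dab a b (c • s) = c • Dab a b s := by
  simp [Dab, iter_pd_smul]

lemma L1 (a b : ℕ) (u : P) :
    Dab a b (X 1 * pd 0 u) = X 1 * Dab (a + 1) b u + (b : ℝ) • Dab (a + 1) (b - 1) u := by
  rw [Dab, iterg_y, iter_pd_add, iter_pd_smul, iterf_y, iterg_pd0, iterg_pd0,
    ← Function.iterate_succ_apply (pd 0), ← Function.iterate_succ_apply (pd 0)]
  rfl

lemma L2 (a b : ℕ) (u : P) :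
    Dab a b (X 0 * pd 1 u) = X 0 * Dab a (b + 1) u + (a : ℝ) • Dab (a - 1) (b + 1) u := by
  rw [Dab, iterg_x, ← Function.iterate_succ_apply (pd 1), iterf_x]
  rfl

lemma L3 (a b : ℕ) (u : P) :
    Dab a b (X 0 * pd 0 u) = X 0 * Dab (a + 1) b u + (a : ℝ) • Dab a b u := by
  rw [Dab, iterg_x, iterg_pd0, iterf_x, ← Function.iterate_succ_apply (pd 0)]
  cases a with
  | zero => simp [Dab]
  | succ j =>
    rw [show (j + 1 - 1) = j from rfl, ← Function.iterate_succ_apply (pd 0)]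
    rfl

lemma L4 (a b : ℕ) (u : P) :
    Dab a b (X 1 * pd 1 u) = X 1 * Dab a (b + 1) u + (b : ℝ) • Dab a b u := by
  rw [Dab, iterg_y, iter_pd_add, iter_pd_smul, iterf_y,
    ← Function.iterate_succ_apply (pd 1)]
  cases b with
  | zero => simp [Dab]
  | succ j =>
    rw [show (j + 1 - 1) = j from rfl, ← Function.iterate_succ_apply (pd 1)]
    rfl

lemma pd_sum (i : Fin 2) (s : Finset ℕ) (f : ℕ → P) :
    pd i (∑ k ∈ s, f k) = ∑ k ∈ s, pd i (f k) := map_sum _ _ _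

lemma CG_add_left (p : ℕ) (a b v : P) : CG p (a + b) v = CG p a v + CG p b v := by
  simp [CG_def, Dab_add, add_mul, smul_add, Finset.sum_add_distrib]

lemma CG_add_right (p : ℕ) (u a b : P) : CG p u (a + b) = CG p u a + CG p u b := by
  simp [CG_def, Dab_add, mul_add, smul_add, Finset.sum_add_distrib]

lemma CG_smul_left (p : ℕ) (c : ℝ) (a v : P) : CG p (c • a) v = c • CG p a v := by
  simp only [CG_def, Dab_smul, smul_mul_assoc, smul_comm c, Finset.smul_sum]

lemma CG_smul_right (p : ℕ) (c : ℝ) (u a : P) : CG p u (c • a) = c • CG p u a := by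
  simp only [CG_def, Dab_smul, mul_smul_comm, smul_comm c, Finset.smul_sum]

lemma CG_sub_left (p : ℕ) (a b v : P) : CG p (a - b) v = CG p a v - CG p b v := by
  have h := CG_add_left p (a - b) b v
  rw [sub_add_cancel] at h
  rw [eq_sub_iff_add_eq, ← h]

lemma CG_sub_right (p : ℕ) (u a b : P) : CG p u (a - b) = CG p u a - CG p u b := by
  have h := CG_add_right p u (a - b) b
  rw [sub_add_cancel] at h
  rw [eq_sub_iff_add_eq, ← h]

lemma CG_neg_left (p : ℕ) (a v : P) : CG p (-a) v = -CG p a v := by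
  have := CG_smul_left p (-1) a v
  simpa using this

lemma CG_neg_right (p : ℕ) (u a : P) : CG p u (-a) = -CG p u a := by
  have := CG_smul_right p (-1) u a
  simpa using this


lemma coeff_cancel (p i : ℕ) :
    ((-1 : ℝ) ^ (i + 1) * (p.choose (i + 1) : ℝ)) * ((i + 1 : ℕ) : ℝ)
      + ((-1 : ℝ) ^ i * (p.choose i : ℝ)) * ((p - i : ℕ) : ℝ) = 0 := by
  have h : ((p.choose (i + 1) * (i + 1) : ℕ) : ℝ) = ((p.choose i * (p - i) : ℕ) : ℝ) := by
    exact_mod_cast congrArg (fun n : ℕ => (n : ℝ)) (Nat.choose_succ_right_eq p i)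
  push_cast at h
  rw [pow_succ]
  push_cast
  linear_combination (-1 : ℝ) ^ (i + 1) * h

lemma cancel_sum (p : ℕ) (E : ℕ → P) (f g : ℕ → P)
    (hf0 : f 0 = 0)
    (hfs : ∀ i < p, f (i + 1) =
      (((-1 : ℝ) ^ (i + 1) * (p.choose (i + 1) : ℝ)) * ((i + 1 : ℕ) : ℝ)) • E i)
    (hgp : g p = 0)
    (hg : ∀ i < p, g i = (((-1 : ℝ) ^ i * (p.choose i : ℝ)) * ((p - i : ℕ) : ℝ)) • E i) :
    ((∑ k ∈ Finset.range (p + 1), f k) + ∑ k ∈ Finset.range (p + 1), g k) = 0 := by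
  rw [Finset.sum_range_succ' f, Finset.sum_range_succ g, hf0, hgp, add_zero, add_zero,
    ← Finset.sum_add_distrib]
  apply Finset.sum_eq_zero
  intro i hi
  have hip := Finset.mem_range.mp hi
  rw [hfs i hip, hg i hip, ← add_smul, coeff_cancel, zero_smul]

lemma Xe_prop (p : ℕ) (u v : P) : Xe (CG p u v) = CG p (Xe u) v + CG p u (Xe v) := by
  have hXe : ∀ w : P, Xe w = X 1 * pd 0 w := fun w => rfl
  rw [hXe, hXe, hXe, CG_def, CG_def, CG_def, ← smul_add, ← Finset.sum_add_distrib,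
    pd_smul, mul_smul_comm, pd_sum, Finset.mul_sum]
  congr 1
  have expand : ∀ k ∈ Finset.range (p + 1),
      ((-1 : ℝ) ^ k * (p.choose k : ℝ)) • (Dab (p - k) k (X 1 * pd 0 u) * Dab k (p - k) v)
        + ((-1 : ℝ) ^ k * (p.choose k : ℝ)) • (Dab (p - k) k u * Dab k (p - k) (X 1 * pd 0 v))
      = X 1 * pd 0 (((-1 : ℝ) ^ k * (p.choose k : ℝ)) • (Dab (p - k) k u * Dab k (p - k) v))
        + (((((-1 : ℝ) ^ k * (p.choose k : ℝ)) * (k : ℝ)) •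
              (Dab (p - k + 1) (k - 1) u * Dab k (p - k) v))
           + ((((-1 : ℝ) ^ k * (p.choose k : ℝ)) * ((p - k : ℕ) : ℝ)) •
              (Dab (p - k) k u * Dab (k + 1) (p - k - 1) v))) := by
    intro k hk
    rw [L1, L1, pd_smul, pd_mul, pd0_Dab, pd0_Dab]
    simp only [smul_eq_C_mul, map_mul]
    ring
  rw [Finset.sum_congr rfl expand, Finset.sum_add_distrib, left_eq_add,
    Finset.sum_add_distrib]
  apply cancel_sum p (fun i => Dab (p - i) i u * Dab (i + 1) (p - i - 1) v)
  · simp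
  · intro i hip
    have h1 : p - (i + 1) + 1 = p - i := by omega
    have h2 : p - (i + 1) = p - i - 1 := by omega
    simp only [Nat.add_sub_cancel]
    rw [h1, h2]
  · simp
  · intro i hip
    rfl

lemma Z_prop (p : ℕ) (u v : P) :
    X 0 * pd 1 (CG p u v) = CG p (X 0 * pd 1 u) v + CG p u (X 0 * pd 1 v) := by
  rw [CG_def, CG_def, CG_def, ← smul_add, ← Finset.sum_add_distrib,
    pd_smul, mul_smul_comm, pd_sum, Finset.mul_sum]
  congr 1
  have expand : ∀ k ∈ Finset.range (p + 1),
      ((-1 : ℝ) ^ k * (p.choose k : ℝ)) • (Dab (p - k) k (X 0 * pd 1 u) * Dab k (p - k) v)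
        + ((-1 : ℝ) ^ k * (p.choose k : ℝ)) • (Dab (p - k) k u * Dab k (p - k) (X 0 * pd 1 v))
      = X 0 * pd 1 (((-1 : ℝ) ^ k * (p.choose k : ℝ)) • (Dab (p - k) k u * Dab k (p - k) v))
        + (((((-1 : ℝ) ^ k * (p.choose k : ℝ)) * (k : ℝ)) •
              (Dab (p - k) k u * Dab (k - 1) (p - k + 1) v))
           + ((((-1 : ℝ) ^ k * (p.choose k : ℝ)) * ((p - k : ℕ) : ℝ)) •
              (Dab (p - k - 1) (k + 1) u * Dab k (p - k) v))) := by
    intro k hk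
    rw [L2, L2, pd_smul, pd_mul, pd1_Dab, pd1_Dab]
    simp only [smul_eq_C_mul, map_mul]
    ring
  rw [Finset.sum_congr rfl expand, Finset.sum_add_distrib, left_eq_add,
    Finset.sum_add_distrib]
  apply cancel_sum p (fun i => Dab (p - i - 1) (i + 1) u * Dab i (p - i) v)
  · simp
  · intro i hip
    have h1 : p - (i + 1) + 1 = p - i := by omega
    have h2 : p - (i + 1) = p - i - 1 := by omega
    simp only [Nat.add_sub_cancel]
    rw [h1, h2]
  · simp
  · intro i hip
    rfl

lemma Ye_prop (p : ℕ) (u v : P) : Ye (CG p u v) = CG p (Ye u) v + CG p u (Ye v) := by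
  have hYe : ∀ w : P, Ye w = -(X 0 * pd 1 w) := fun w => rfl
  rw [hYe, hYe, hYe, Z_prop, CG_neg_left, CG_neg_right, neg_add]

lemma He_prop (p : ℕ) (u v : P) : He (CG p u v) = CG p (He u) v + CG p u (He v) := by
  have hHe : ∀ w : P, He w = X 0 * pd 0 w - X 1 * pd 1 w := fun w => rfl
  rw [hHe, hHe, hHe, CG_def, CG_def, CG_def, ← smul_add, ← Finset.sum_add_distrib,
    pd_smul, pd_smul, mul_smul_comm, mul_smul_comm, ← smul_sub, pd_sum, pd_sum,
    Finset.mul_sum, Finset.mul_sum, ← Finset.sum_sub_distrib]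
  congr 1
  apply Finset.sum_congr rfl
  intro k hk
  rw [Dab_sub, Dab_sub, L3, L4, L3, L4, pd_smul, pd_smul, pd_mul, pd_mul,
    pd0_Dab, pd0_Dab, pd1_Dab, pd1_Dab]
  simp only [smul_eq_C_mul, map_mul]
  ring

attribute [local instance] LieRing.ofAssociativeRing

def goodSet : LieSubalgebra ℝ (Module.End ℝ P) where
  carrier := {α | ∀ (p : ℕ) (u v : P), α (CG p u v) = CG p (α u) v + CG p u (α v)}
  add_mem' := by
    intro α β hα hβ p u v
    simp only [LinearMap.add_apply, hα p u v, hβ p u v, CG_add_left, CG_add_right]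
    abel
  zero_mem' := by
    intro p u v
    have h := CG_smul_left p (0 : ℝ) u v
    have h' := CG_smul_right p (0 : ℝ) u (0 : P)
    simp only [zero_smul] at h h'
    simp [h, h']
  smul_mem' := by
    intro c α hα p u v
    simp only [LinearMap.smul_apply, hα p u v, CG_smul_left, CG_smul_right, smul_add]
  lie_mem' := by
    intro α β hα hβ p u v
    have hbr : ∀ w : P, (⁅α, β⁆ : Module.End ℝ P) w = α (β w) - β (α w) := by
      intro w
      rw [Ring.lie_def, LinearMap.sub_apply, Module.End.mul_apply, Module.End.mul_apply]
    rw [hbr, hbr, hbr, hα p u v, hβ p u v, map_add, map_add, hα p (β u) v, hα p u (β v),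
      hβ p (α u) v, hβ p u (α v), CG_sub_left, CG_sub_right]
    abel


/-- the Clebsch–Gordan pairing is equivariant for the derivation
action of the Lie algebra generated by X, Y, H:
α(⟨u,v⟩_p) = ⟨α u, v⟩_p + ⟨u, α v⟩_p. -/
theorem cg_sl2_equivariance :
    ∀ α ∈ LieSubalgebra.lieSpan ℝ (Module.End ℝ P) ({Xe, Ye, He} : Set (Module.End ℝ P)),
      ∀ (m n p : ℕ) (u v : P), u.IsHomogeneous m → v.IsHomogeneous n →
        α (CG p u v) = CG p (α u) v + CG p u (α v) := by
  intro α hα m n p u v _ _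
  have hsub : ({Xe, Ye, He} : Set (Module.End ℝ P)) ⊆ ↑goodSet := by
    rintro x (rfl | rfl | rfl)
    · exact fun p u v => Xe_prop p u v
    · exact fun p u v => Ye_prop p u v
    · exact fun p u v => He_prop p u v
  have hmem : α ∈ goodSet := (LieSubalgebra.lieSpan_le.mpr hsub) hα
  exact hmem p u v
end
end

section
/- For v = (gx + hy)^8 with (g,h) ≠ (0,0), the rank of the 9×9 matrix J(v) equals 2. More generally, if v = c·(gx+hy)^8 is a nonzero octic with exactly one distinct root, then rank J(v) = 2, and the column space of J(v) is spanned by the column vectors corresponding to λ+16φ_0 and φ_2-type directions, which coincides with the tangent space at v to the cone {c(gx+hy)^8}. -/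
noncomputable section

variable {K : Type*} [CommRing K]

/-- The ω⁻⁴ column of J (common factor 9216 removed), from Appendix A. -/
def c0 (t : Fin 9 → K) : Fin 9 → K :=
  ![280*t 0*t 6 - 280*t 1*t 5,
    -245*t 2*t 5 + 70*t 0*t 7 + 175*t 1*t 6,
    70*t 2*t 6 - 210*t 3*t 5 + 130*t 1*t 7 + 10*t 0*t 8,
    -175*t 4*t 5 - 35*t 3*t 6 + 35*t 1*t 8 + 175*t 2*t 7,
    84*t 2*t 8 + 196*t 3*t 7 - 140*t 5^2 - 140*t 4*t 6,
    -350*t 5*t 6 + 175*t 4*t 7 + 175*t 3*t 8,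
    350*t 4*t 8 - 350*t 6^2,
    700*t 5*t 8 - 700*t 7*t 6,
    -1400*t 7^2 + 1400*t 8*t 6]

/-- The ω⁻² column of J (common factor 9216 removed). -/
def c1 (t : Fin 9 → K) : Fin 9 → K :=
  ![-1400*t 0*t 5 + 1400*t 1*t 4,
    -385*t 0*t 6 - 840*t 1*t 5 + 1225*t 2*t 4,
    -280*t 2*t 5 + 1050*t 3*t 4 - 70*t 0*t 7 - 700*t 1*t 6,
    -910*t 2*t 6 + 280*t 3*t 5 + 875*t 4^2 - 240*t 1*t 7 - 5*t 0*t 8,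
    1540*t 4*t 5 - 952*t 3*t 6 - 28*t 1*t 8 - 560*t 2*t 7,
    -105*t 2*t 8 - 1120*t 3*t 7 + 1400*t 5^2 - 175*t 4*t 6,
    2100*t 5*t 6 - 1750*t 4*t 7 - 350*t 3*t 8,
    2450*t 6^2 - 1050*t 4*t 8 - 1400*t 5*t 7,
    -2800*t 5*t 8 + 2800*t 7*t 6]

/-- The ω⁰ column of J (common factor 9216 removed). -/
def c2 (t : Fin 9 → K) : Fin 9 → K :=
  ![-2800*t 1*t 3 + 2800*t 0*t 4,
    -2450*t 2*t 3 + 875*t 0*t 5 + 1575*t 1*t 4,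
    210*t 0*t 6 - 2100*t 3^2 + 1540*t 1*t 5 + 350*t 2*t 4,
    1890*t 2*t 5 - 2625*t 3*t 4 + 35*t 0*t 7 + 700*t 1*t 6,
    1568*t 2*t 6 + 336*t 3*t 5 - 2100*t 4^2 + 192*t 1*t 7 + 4*t 0*t 8,
    -2625*t 4*t 5 + 1890*t 3*t 6 + 35*t 1*t 8 + 700*t 2*t 7,
    210*t 2*t 8 + 1540*t 3*t 7 - 2100*t 5^2 + 350*t 4*t 6,
    -2450*t 5*t 6 + 1575*t 4*t 7 + 875*t 3*t 8,
    2800*t 4*t 8 - 2800*t 5*t 7]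

/-- The ω² column of J (common factor 9216 removed). -/
def c3 (t : Fin 9 → K) : Fin 9 → K :=
  ![2800*t 2*t 1 - 2800*t 3*t 0,
    -1400*t 1*t 3 - 1050*t 0*t 4 + 2450*t 2^2,
    2100*t 2*t 3 - 350*t 0*t 5 - 1750*t 1*t 4,
    -105*t 0*t 6 + 1400*t 3^2 - 1120*t 1*t 5 - 175*t 2*t 4,
    -952*t 2*t 5 + 1540*t 3*t 4 - 28*t 0*t 7 - 560*t 1*t 6,
    -910*t 2*t 6 + 280*t 3*t 5 + 875*t 4^2 - 240*t 1*t 7 - 5*t 0*t 8,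
    1050*t 4*t 5 - 280*t 3*t 6 - 70*t 1*t 8 - 700*t 2*t 7,
    1225*t 4*t 6 - 385*t 2*t 8 - 840*t 3*t 7,
    1400*t 4*t 7 - 1400*t 3*t 8]

/-- The ω⁴ column of J (common factor 9216 removed). -/
def c4 (t : Fin 9 → K) : Fin 9 → K :=
  ![1400*t 2*t 0 - 1400*t 1^2,
    -700*t 2*t 1 + 700*t 3*t 0,
    -350*t 2^2 + 350*t 0*t 4,
    -350*t 2*t 3 + 175*t 0*t 5 + 175*t 1*t 4,
    84*t 0*t 6 - 140*t 3^2 + 196*t 1*t 5 - 140*t 2*t 4,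
    -35*t 2*t 5 - 175*t 3*t 4 + 35*t 0*t 7 + 175*t 1*t 6,
    70*t 2*t 6 - 210*t 3*t 5 + 130*t 1*t 7 + 10*t 0*t 8,
    70*t 1*t 8 - 245*t 3*t 6 + 175*t 2*t 7,
    -280*t 3*t 7 + 280*t 2*t 8]

/-- The λ column of J. -/
def c5 (t : Fin 9 → K) : Fin 9 → K := t

/-- The φ₋₂ column of J. -/
def c6 (t : Fin 9 → K) : Fin 9 → K :=
  ![-16*t 1, -14*t 2, -12*t 3, -10*t 4, -8*t 5, -6*t 6, -4*t 7, -2*t 8, 0]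

/-- The φ₀ column of J. -/
def c7 (t : Fin 9 → K) : Fin 9 → K :=
  ![16*t 0, 12*t 1, 8*t 2, 4*t 3, 0, -4*t 5, -8*t 6, -12*t 7, -16*t 8]

/-- The φ₂ column of J. -/
def c8 (t : Fin 9 → K) : Fin 9 → K :=
  ![0, 2*t 0, 4*t 1, 6*t 2, 8*t 3, 10*t 4, 12*t 5, 14*t 6, 16*t 7]

/-- The 9×9 matrix J(T) from Appendix A of the paper (the factor 9216 = 2¹⁰3²
is restored on the five ω-columns). -/
def Jmat (t : Fin 9 → K) : Matrix (Fin 9) (Fin 9) K :=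
  Matrix.of fun i j =>
    (![fun i' => (9216 : K) * c0 t i', fun i' => (9216 : K) * c1 t i',
       fun i' => (9216 : K) * c2 t i', fun i' => (9216 : K) * c3 t i',
       fun i' => (9216 : K) * c4 t i',
       c5 t, c6 t, c7 t, c8 t] j) i

/-- The coefficient vector (binomial basis) of c·(gx+hy)⁸. -/
def pow8Vec (c g h : ℝ) : Fin 9 → ℝ := fun k =>
  c * g ^ (8 - (k : ℕ)) * h ^ (k : ℕ)

/-- The coefficient vector (binomial basis) of 8(Gx+Hy)(gx+hy)⁷, a tangent
vector at (gx+hy)⁸ to the cone of perfect 8th powers. -/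
def tvec (g h G H : ℝ) : Fin 9 → ℝ := fun k =>
  (8 - (k : ℕ)) * G * g ^ (7 - (k : ℕ)) * h ^ (k : ℕ)
    + (k : ℕ) * H * g ^ (8 - (k : ℕ)) * h ^ ((k : ℕ) - 1)

section Aux

lemma fv0 : ((0:Fin 9):ℕ) = 0 := rfl
lemma fv1 : ((1:Fin 9):ℕ) = 1 := rfl
lemma fv2 : ((2:Fin 9):ℕ) = 2 := rfl
lemma fv3 : ((3:Fin 9):ℕ) = 3 := rfl
lemma fv4 : ((4:Fin 9):ℕ) = 4 := rfl
lemma fv5 : ((5:Fin 9):ℕ) = 5 := rfl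
lemma fv6 : ((6:Fin 9):ℕ) = 6 := rfl
lemma fv7 : ((7:Fin 9):ℕ) = 7 := rfl
lemma fv8 : ((8:Fin 9):ℕ) = 8 := rfl

lemma tvec_eq (g h G H : ℝ) : tvec g h G H = G • tvec g h 1 0 + H • tvec g h 0 1 := by
  funext k
  simp only [tvec, Pi.add_apply, Pi.smul_apply, smul_eq_mul]
  ring

lemma c0_eq (c g h : ℝ) (i : Fin 9) : c0 (pow8Vec c g h) i = 0 := by
  fin_cases i <;>
  · simp only [c0, Matrix.cons_val_succ', Matrix.cons_val_zero', pow8Vec, tvec,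
      Pi.add_apply, Pi.smul_apply, smul_eq_mul, Pi.zero_apply,
      fv0, fv1, fv2, fv3, fv4, fv5, fv6, fv7, fv8]
    norm_num
    try ring

lemma c1_eq (c g h : ℝ) (i : Fin 9) : c1 (pow8Vec c g h) i = 0 := by
  fin_cases i <;>
  · simp only [c1, Matrix.cons_val_succ', Matrix.cons_val_zero', pow8Vec, tvec,
      Pi.add_apply, Pi.smul_apply, smul_eq_mul, Pi.zero_apply,
      fv0, fv1, fv2, fv3, fv4, fv5, fv6, fv7, fv8]
    norm_num
    try ring

lemma c2_eq (c g h : ℝ) (i : Fin 9) : c2 (pow8Vec c g h) i = 0 := by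
  fin_cases i <;>
  · simp only [c2, Matrix.cons_val_succ', Matrix.cons_val_zero', pow8Vec, tvec,
      Pi.add_apply, Pi.smul_apply, smul_eq_mul, Pi.zero_apply,
      fv0, fv1, fv2, fv3, fv4, fv5, fv6, fv7, fv8]
    norm_num
    try ring

lemma c3_eq (c g h : ℝ) (i : Fin 9) : c3 (pow8Vec c g h) i = 0 := by
  fin_cases i <;>
  · simp only [c3, Matrix.cons_val_succ', Matrix.cons_val_zero', pow8Vec, tvec,
      Pi.add_apply, Pi.smul_apply, smul_eq_mul, Pi.zero_apply,
      fv0, fv1, fv2, fv3, fv4, fv5, fv6, fv7, fv8]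
    norm_num
    try ring

lemma c4_eq (c g h : ℝ) (i : Fin 9) : c4 (pow8Vec c g h) i = 0 := by
  fin_cases i <;>
  · simp only [c4, Matrix.cons_val_succ', Matrix.cons_val_zero', pow8Vec, tvec,
      Pi.add_apply, Pi.smul_apply, smul_eq_mul, Pi.zero_apply,
      fv0, fv1, fv2, fv3, fv4, fv5, fv6, fv7, fv8]
    norm_num
    try ring

lemma c5_eq (c g h : ℝ) (i : Fin 9) :
    c5 (pow8Vec c g h) i = ((c*g/8) • tvec g h 1 0 + (c*h/8) • tvec g h 0 1) i := by
  fin_cases i <;>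
  · simp only [c5, Matrix.cons_val_succ', Matrix.cons_val_zero', pow8Vec, tvec,
      Pi.add_apply, Pi.smul_apply, smul_eq_mul, Pi.zero_apply,
      fv0, fv1, fv2, fv3, fv4, fv5, fv6, fv7, fv8]
    norm_num
    try ring

lemma c6_eq (c g h : ℝ) (i : Fin 9) :
    c6 (pow8Vec c g h) i = ((-(2*c*h)) • tvec g h 1 0) i := by
  fin_cases i <;>
  · simp only [c6, Matrix.cons_val_succ', Matrix.cons_val_zero', pow8Vec, tvec,
      Pi.add_apply, Pi.smul_apply, smul_eq_mul, Pi.zero_apply,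
      fv0, fv1, fv2, fv3, fv4, fv5, fv6, fv7, fv8]
    norm_num
    try ring

lemma c7_eq (c g h : ℝ) (i : Fin 9) :
    c7 (pow8Vec c g h) i = ((2*c*g) • tvec g h 1 0 + (-(2*c*h)) • tvec g h 0 1) i := by
  fin_cases i <;>
  · simp only [c7, Matrix.cons_val_succ', Matrix.cons_val_zero', pow8Vec, tvec,
      Pi.add_apply, Pi.smul_apply, smul_eq_mul, Pi.zero_apply,
      fv0, fv1, fv2, fv3, fv4, fv5, fv6, fv7, fv8]
    norm_num
    try ring

lemma c8_eq (c g h : ℝ) (i : Fin 9) :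
    c8 (pow8Vec c g h) i = ((2*c*g) • tvec g h 0 1) i := by
  fin_cases i <;>
  · simp only [c8, Matrix.cons_val_succ', Matrix.cons_val_zero', pow8Vec, tvec,
      Pi.add_apply, Pi.smul_apply, smul_eq_mul, Pi.zero_apply,
      fv0, fv1, fv2, fv3, fv4, fv5, fv6, fv7, fv8]
    norm_num
    try ring

open Matrix in
lemma Jcols (c g h : ℝ) : (Jmat (pow8Vec c g h))ᵀ =
    ![0, 0, 0, 0, 0,
      (c*g/8) • tvec g h 1 0 + (c*h/8) • tvec g h 0 1,
      (-(2*c*h)) • tvec g h 1 0,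
      (2*c*g) • tvec g h 1 0 + (-(2*c*h)) • tvec g h 0 1,
      (2*c*g) • tvec g h 0 1] := by
  funext j
  fin_cases j
  · funext i
    show (9216:ℝ) * c0 (pow8Vec c g h) i = 0
    rw [c0_eq]; ring
  · funext i
    show (9216:ℝ) * c1 (pow8Vec c g h) i = 0
    rw [c1_eq]; ring
  · funext i
    show (9216:ℝ) * c2 (pow8Vec c g h) i = 0
    rw [c2_eq]; ring
  · funext i
    show (9216:ℝ) * c3 (pow8Vec c g h) i = 0
    rw [c3_eq]; ring
  · funext i
    show (9216:ℝ) * c4 (pow8Vec c g h) i = 0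
    rw [c4_eq]; ring
  · exact funext fun i => c5_eq c g h i
  · exact funext fun i => c6_eq c g h i
  · exact funext fun i => c7_eq c g h i
  · exact funext fun i => c8_eq c g h i

end Aux

/-- for a nonzero octic v = c(gx+hy)⁸ with exactly one distinct
root, rank J(v) = 2 and the column space of J(v) coincides with the tangent
space at v to the cone {c(gx+hy)⁸} of perfect 8th powers. -/
theorem rank_J_at_eighth_power (c g h : ℝ) (hc : c ≠ 0) (hgh : ¬(g = 0 ∧ h = 0)) :
    (Jmat (pow8Vec c g h)).rank = 2 ∧
    LinearMap.range (Jmat (pow8Vec c g h)).mulVecLin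
      = Submodule.span ℝ {x : Fin 9 → ℝ | ∃ G H : ℝ, x = tvec g h G H} := by
  have hgh' : g ≠ 0 ∨ h ≠ 0 := not_and_or.mp hgh
  set T1 : Fin 9 → ℝ := tvec g h 1 0 with hT1def
  set T2 : Fin 9 → ℝ := tvec g h 0 1 with hT2def
  -- the range is the span of T1, T2
  have hrange : LinearMap.range (Jmat (pow8Vec c g h)).mulVecLin
      = Submodule.span ℝ {T1, T2} := by
    rw [Matrix.range_mulVecLin, show (Jmat (pow8Vec c g h)).col = Matrix.transpose (Jmat (pow8Vec c g h)) from rfl, Jcols]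
    apply le_antisymm
    · rw [Submodule.span_le]
      rintro x ⟨j, rfl⟩
      have hm1 : T1 ∈ Submodule.span ℝ {T1, T2} :=
        Submodule.subset_span (Set.mem_insert _ _)
      have hm2 : T2 ∈ Submodule.span ℝ {T1, T2} :=
        Submodule.subset_span (Set.mem_insert_of_mem _ rfl)
      fin_cases j <;>
        simp only [Matrix.cons_val_succ', Matrix.cons_val_zero', SetLike.mem_coe] <;>
        first
          | exact Submodule.zero_mem _
          | exact Submodule.add_mem _ (Submodule.smul_mem _ _ hm1) (Submodule.smul_mem _ _ hm2)
          | exact Submodule.smul_mem _ _ hm1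
          | exact Submodule.smul_mem _ _ hm2
    · rw [Submodule.span_le]
      set S := Submodule.span ℝ (Set.range
        ![(0 : Fin 9 → ℝ), 0, 0, 0, 0,
          (c*g/8) • T1 + (c*h/8) • T2,
          (-(2*c*h)) • T1,
          (2*c*g) • T1 + (-(2*c*h)) • T2,
          (2*c*g) • T2]) with hS
      have h6 : (-(2*c*h)) • T1 ∈ S := Submodule.subset_span ⟨6, rfl⟩
      have h7 : (2*c*g) • T1 + (-(2*c*h)) • T2 ∈ S := Submodule.subset_span ⟨7, rfl⟩
      have h8 : (2*c*g) • T2 ∈ S := Submodule.subset_span ⟨8, rfl⟩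
      have key : T1 ∈ S ∧ T2 ∈ S := by
        rcases hgh' with hg | hh
        · have ha : (2*c*g) ≠ 0 := by
            simp [hg, hc]
          have hT2 : T2 ∈ S := by
            have : T2 = (2*c*g)⁻¹ • ((2*c*g) • T2) := by
              rw [smul_smul, inv_mul_cancel₀ ha, one_smul]
            rw [this]
            exact S.smul_mem _ h8
          refine ⟨?_, hT2⟩
          have : T1 = (2*c*g)⁻¹ • ((2*c*g) • T1 + (-(2*c*h)) • T2)
              + ((2*c*g)⁻¹ * (2*c*h)) • T2 := by
            funext i
            simp only [Pi.add_apply, Pi.smul_apply, smul_eq_mul]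
            field_simp
            try ring
          rw [this]
          exact S.add_mem (S.smul_mem _ h7) (S.smul_mem _ hT2)
        · have hb : (-(2*c*h)) ≠ 0 := by
            simp [hh, hc]
          have hT1 : T1 ∈ S := by
            have : T1 = (-(2*c*h))⁻¹ • ((-(2*c*h)) • T1) := by
              rw [smul_smul, inv_mul_cancel₀ hb, one_smul]
            rw [this]
            exact S.smul_mem _ h6
          refine ⟨hT1, ?_⟩
          have : T2 = (-(2*c*h))⁻¹ • ((2*c*g) • T1 + (-(2*c*h)) • T2)
              + (-((-(2*c*h))⁻¹ * (2*c*g))) • T1 := by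
            funext i
            simp only [Pi.add_apply, Pi.smul_apply, smul_eq_mul]
            field_simp
            try ring
          rw [this]
          exact S.add_mem (S.smul_mem _ h7) (S.smul_mem _ hT1)
      intro x hx
      rcases hx with rfl | hx
      · exact key.1
      · rcases hx with rfl
        exact key.2
  -- the target span equals the span of T1, T2
  have hset : Submodule.span ℝ {x : Fin 9 → ℝ | ∃ G H : ℝ, x = tvec g h G H}
      = Submodule.span ℝ {T1, T2} := by
    apply le_antisymm
    · rw [Submodule.span_le]
      rintro x ⟨G, H, rfl⟩
      rw [tvec_eq]
      exact Submodule.add_mem _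
        (Submodule.smul_mem _ _ (Submodule.subset_span (Set.mem_insert _ _)))
        (Submodule.smul_mem _ _ (Submodule.subset_span (Set.mem_insert_of_mem _ rfl)))
    · rw [Submodule.span_le]
      intro x hx
      rcases hx with rfl | hx
      · exact Submodule.subset_span ⟨1, 0, rfl⟩
      · rcases hx with rfl
        exact Submodule.subset_span ⟨0, 1, rfl⟩
  refine ⟨?_, hrange.trans hset.symm⟩
  -- rank computation
  have hli : LinearIndependent ℝ ![T1, T2] := by
    rw [LinearIndependent.pair_iff]
    intro s t hst
    rcases hgh' with hg | hh
    · have e0 := congrFun hst 0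
      have e1 := congrFun hst 1
      simp only [hT1def, hT2def, Pi.add_apply, Pi.smul_apply, smul_eq_mul,
        Pi.zero_apply, tvec, fv0, fv1] at e0 e1
      norm_num at e0 e1
      have hs : s = 0 := e0.resolve_right hg
      subst hs
      norm_num at e1
      exact ⟨rfl, e1.resolve_right hg⟩
    · have e7 := congrFun hst 7
      have e8 := congrFun hst 8
      simp only [hT1def, hT2def, Pi.add_apply, Pi.smul_apply, smul_eq_mul,
        Pi.zero_apply, tvec, fv7, fv8] at e7 e8
      norm_num at e7 e8
      have ht : t = 0 := e8.resolve_right hh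
      subst ht
      norm_num at e7
      exact ⟨e7.resolve_right hh, rfl⟩
  have hsetrange : ({T1, T2} : Set (Fin 9 → ℝ)) = Set.range ![T1, T2] := by
    ext x
    simp [Fin.exists_fin_two, eq_comm, or_comm]
  simp only [Matrix.rank]
  rw [hrange, hsetrange, finrank_span_eq_card hli]
  simp
end
end
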